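/- Let e ∈ ℂ[S_N] be a primitive idempotent not lying in the annihilator ideal J₀ of the Hilbert space H. Then e·(ē)* ≠ 0, and there exists a nonzero real number α with e·(ē)*·e = α·e; consequently f := (1/α)·e·(ē)* is an idempotent satisfying (f̄)* = f and generating the same right ideal as e. -/

import Mathlib

open MonoidAlgebra

noncomputable section

/-- The complex group ring `ℂ[S_N]`. -/
abbrev GA (N : ℕ) : Type := MonoidAlgebra ℂ (Equiv.Perm (Fin N))

/-- The star operation `a* = Σ_p a_p p⁻¹`. -/
def starOp {N : ℕ} (a : GA N) : GA N :=
  MonoidAlgebra.ofCoeff (Finsupp.equivMapDomain (Equiv.inv (Equiv.Perm (Fin N))) a.coeff)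

/-- Coefficient-wise complex conjugation `ā = Σ_p conj(a_p) p`. -/
def conjOp {N : ℕ} (a : GA N) : GA N :=
  MonoidAlgebra.ofCoeff (Finsupp.mapRange (starRingEnd ℂ) (map_zero _) a.coeff)

/-- The Hilbert space `H` with orthonormal basis indexed by `σ : {1,…,N} → {1,…,K}`. -/
abbrev H (N K : ℕ) : Type := (Fin N → Fin K) → ℂ

/-- The basis vector `|σ⟩`. -/
def ket {N K : ℕ} (σ : Fin N → Fin K) : H N K :=
  fun τ => if τ = σ then 1 else 0

/-- Action of `a = Σ_p a_p p ∈ ℂ[S_N]` on `w ∈ H`: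
`a w = Σ_p Σ_σ a_p w_σ |σ ∘ p⁻¹⟩`; the coefficient of `aw` at `τ` is `Σ_p a_p w_{τ∘p}`. -/
def act {N K : ℕ} (a : GA N) (w : H N K) : H N K :=
  fun τ => ∑ p : Equiv.Perm (Fin N), a.coeff p * w (τ ∘ p)

/-- The inner product `⟨u, v⟩ = Σ_σ u_σ conj(v_σ)`. -/
def inn {N K : ℕ} (u v : H N K) : ℂ :=
  ∑ σ : Fin N → Fin K, u σ * (starRingEnd ℂ) (v σ)

variable {N K : ℕ}

lemma sop_apply (a : GA N) (p : Equiv.Perm (Fin N)) :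
    (starOp (conjOp a)).coeff p = (starRingEnd ℂ) (a.coeff p⁻¹) := rfl

/-- Precomposition by a permutation, as an equivalence on `Fin N → Fin K`. -/
def preEquiv (p : Equiv.Perm (Fin N)) : (Fin N → Fin K) ≃ (Fin N → Fin K) where
  toFun σ := σ ∘ ⇑p
  invFun σ := σ ∘ ⇑p⁻¹
  left_inv σ := by funext i; simp
  right_inv σ := by funext i; simp

lemma adjoint (a : GA N) (u v : H N K) :
    inn (act a u) v = inn u (act (starOp (conjOp a)) v) := by
  have L : inn (act a u) v
      = ∑ p : Equiv.Perm (Fin N), ∑ σ : Fin N → Fin K,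
          a.coeff p * u σ * (starRingEnd ℂ) (v (σ ∘ ⇑p⁻¹)) := by
    rw [inn]
    simp only [act, Finset.sum_mul]
    rw [Finset.sum_comm]
    refine Finset.sum_congr rfl fun p _ => ?_
    refine Fintype.sum_equiv (preEquiv p) _ _ fun σ => ?_
    show a.coeff p * u (σ ∘ ⇑p) * (starRingEnd ℂ) (v σ)
        = a.coeff p * u (σ ∘ ⇑p) * (starRingEnd ℂ) (v ((σ ∘ ⇑p) ∘ ⇑p⁻¹))
    have hσ : (σ ∘ ⇑p) ∘ ⇑p⁻¹ = σ := by funext i; simp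
    rw [hσ]
  have R : inn u (act (starOp (conjOp a)) v)
      = ∑ p : Equiv.Perm (Fin N), ∑ σ : Fin N → Fin K,
          a.coeff p * u σ * (starRingEnd ℂ) (v (σ ∘ ⇑p⁻¹)) := by
    rw [inn]
    simp only [act, map_sum, map_mul, Finset.mul_sum, sop_apply, Complex.conj_conj]
    rw [Finset.sum_comm]
    refine Fintype.sum_equiv (Equiv.inv (Equiv.Perm (Fin N))) _ _ fun p => ?_
    refine Finset.sum_congr rfl fun σ _ => ?_
    show u σ * (a.coeff p⁻¹ * (starRingEnd ℂ) (v (σ ∘ ⇑p))) = _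
    show _ = a.coeff p⁻¹ * u σ * (starRingEnd ℂ) (v (σ ∘ ⇑(p⁻¹)⁻¹))
    rw [inv_inv]
    ring
  rw [L, R]

def innR (v : H N K) : ℝ := ∑ σ : Fin N → Fin K, Complex.normSq (v σ)

lemma inn_self (v : H N K) : inn v v = ((innR v : ℝ) : ℂ) := by
  rw [inn, innR]
  push_cast
  exact Finset.sum_congr rfl fun σ _ => (Complex.mul_conj (v σ))

lemma innR_eq_zero {v : H N K} (h : innR v = 0) : v = 0 := by
  funext σ
  have := (Finset.sum_eq_zero_iff_of_nonneg
    (fun τ _ => Complex.normSq_nonneg (v τ))).mp h σ (Finset.mem_univ σ)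
  exact Complex.normSq_eq_zero.mp this

lemma inn_zero_left (u : H N K) : inn 0 u = 0 := by simp [inn]

lemma inn_smul_left (c : ℂ) (v u : H N K) : inn (c • v) u = c * inn v u := by
  simp [inn, Finset.mul_sum, mul_assoc]

@[simp] lemma ga_add_apply (a b : GA N) (q : Equiv.Perm (Fin N)) : (a+b).coeff q = a.coeff q + b.coeff q := rfl
@[simp] lemma ga_smul_apply (c : ℂ) (a : GA N) (q : Equiv.Perm (Fin N)) : (c • a).coeff q = c * a.coeff q := rfl
@[simp] lemma ga_zero_apply (q : Equiv.Perm (Fin N)) : (0:GA N).coeff q = 0 := rfl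

lemma sop_zero : starOp (conjOp (0 : GA N)) = 0 := by
  apply MonoidAlgebra.ext; apply Finsupp.ext; intro p; rw [sop_apply]; simp

lemma sop_add (a b : GA N) :
    starOp (conjOp (a + b)) = starOp (conjOp a) + starOp (conjOp b) := by
  apply MonoidAlgebra.ext; apply Finsupp.ext; intro p
  rw [ga_add_apply, sop_apply, sop_apply, sop_apply, ga_add_apply, map_add]

lemma sop_single (p : Equiv.Perm (Fin N)) (c : ℂ) :
    starOp (conjOp (MonoidAlgebra.single p c : GA N)) =
      MonoidAlgebra.single p⁻¹ ((starRingEnd ℂ) c) := by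
  apply MonoidAlgebra.ext; apply Finsupp.ext; intro q
  rw [sop_apply, MonoidAlgebra.coeff_single, MonoidAlgebra.coeff_single, Finsupp.single_apply, Finsupp.single_apply]
  by_cases h : p = q⁻¹
  · rw [if_pos h, if_pos (by rw [h]; simp)]
  · rw [if_neg h, if_neg (by intro hq; exact h (by rw [← hq]; simp)), map_zero]

lemma sop_sop (a : GA N) : starOp (conjOp (starOp (conjOp a))) = a := by
  apply MonoidAlgebra.ext; apply Finsupp.ext; intro p
  rw [sop_apply, sop_apply]
  simp

lemma sop_smul (c : ℂ) (a : GA N) :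
    starOp (conjOp (c • a)) = (starRingEnd ℂ) c • starOp (conjOp a) := by
  apply MonoidAlgebra.ext; apply Finsupp.ext; intro p
  rw [sop_apply, ga_smul_apply, ga_smul_apply, sop_apply, map_mul]

lemma sop_mul (a b : GA N) :
    starOp (conjOp (a * b)) = starOp (conjOp b) * starOp (conjOp a) := by
  induction a using MonoidAlgebra.induction_linear with
  | zero => rw [zero_mul, sop_zero, mul_zero]
  | add x y hx hy => rw [add_mul, sop_add, hx, hy, sop_add, mul_add]
  | single p c =>
    induction b using MonoidAlgebra.induction_linear with
    | zero => rw [mul_zero, sop_zero, zero_mul]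
    | add x y hx hy => rw [mul_add, sop_add, hx, hy, sop_add, add_mul]
    | single q d =>
      show starOp (conjOp (MonoidAlgebra.single p c * MonoidAlgebra.single q d)) = _
      rw [MonoidAlgebra.single_mul_single]
      show starOp (conjOp (MonoidAlgebra.single (p*q) (c*d))) =
        starOp (conjOp (MonoidAlgebra.single q d)) * starOp (conjOp (MonoidAlgebra.single p c))
      rw [sop_single, sop_single, sop_single]
      show _ = MonoidAlgebra.single q⁻¹ _ * MonoidAlgebra.single p⁻¹ _
      rw [MonoidAlgebra.single_mul_single, map_mul, mul_inv_rev, mul_comm ((starRingEnd ℂ) d)]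

lemma act_single (p : Equiv.Perm (Fin N)) (c : ℂ) (u : H N K) :
    act (MonoidAlgebra.single p c : GA N) u = fun τ => c * u (τ ∘ p) := by
  funext τ
  show (∑ q : Equiv.Perm (Fin N), (MonoidAlgebra.single p c : GA N).coeff q * u (τ ∘ q)) = _
  rw [Finset.sum_eq_single p]
  · rw [MonoidAlgebra.coeff_single, Finsupp.single_eq_same]
  · intro q _ hq; rw [MonoidAlgebra.coeff_single, Finsupp.single_eq_of_ne hq, zero_mul]
  · intro h; exact absurd (Finset.mem_univ p) h

lemma act_zero (u : H N K) : act (0 : GA N) u = 0 := by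
  funext τ; simp [act]

lemma act_add (a b : GA N) (u : H N K) : act (a + b) u = act a u + act b u := by
  funext τ
  simp [act, add_mul, Finset.sum_add_distrib]

lemma act_addH (a : GA N) (u v : H N K) : act a (u + v) = act a u + act a v := by
  funext τ
  simp [act, mul_add, Finset.sum_add_distrib]

lemma act_zeroH (a : GA N) : act a (0 : H N K) = 0 := by
  funext τ; simp [act]

lemma act_smul (c : ℂ) (a : GA N) (u : H N K) : act (c • a) u = c • act a u := by
  funext τ
  simp [act, Finset.mul_sum, mul_assoc]

lemma act_mul (a b : GA N) (u : H N K) : act (a * b) u = act a (act b u) := by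
  induction a using MonoidAlgebra.induction_linear with
  | zero => rw [zero_mul, act_zero, act_zero]
  | add x y hx hy => rw [add_mul, act_add, hx, hy, act_add]
  | single p c =>
    induction b using MonoidAlgebra.induction_linear with
    | zero => rw [mul_zero, act_zero, act_zeroH]
    | add x y hx hy => rw [mul_add, act_add, hx, hy, act_add, act_addH]
    | single q d =>
      show act (MonoidAlgebra.single p c * MonoidAlgebra.single q d) u = _
      rw [MonoidAlgebra.single_mul_single]
      show act (MonoidAlgebra.single (p*q) (c*d)) u
          = act (MonoidAlgebra.single p c) (act (MonoidAlgebra.single q d) u)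
      rw [act_single, act_single, act_single]
      funext τ
      simp only [Function.comp_assoc]
      rw [mul_assoc]
      rfl

/-- for a primitive idempotent `e ∉ J₀`, one has `e·(ē)* ≠ 0`, there is a
nonzero real `α` with `e·(ē)*·e = α e`, and `f = (1/α)·e·(ē)*` is an idempotent with
property (S) generating the same right ideal as `e`. -/
theorem primitive_idempotent_selfadjoint (N K : ℕ) (e : GA N) (he : e * e = e)
    (hprim : ∀ x : GA N, ∃ c : ℂ, e * x * e = c • e)
    (hne : ∃ u : H N K, act e u ≠ 0) :
    e * starOp (conjOp e) ≠ 0 ∧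
    ∃ α : ℝ, α ≠ 0 ∧ e * starOp (conjOp e) * e = (α : ℂ) • e ∧
      ((α : ℂ)⁻¹ • (e * starOp (conjOp e))) * ((α : ℂ)⁻¹ • (e * starOp (conjOp e))) =
        (α : ℂ)⁻¹ • (e * starOp (conjOp e)) ∧
      starOp (conjOp ((α : ℂ)⁻¹ • (e * starOp (conjOp e)))) =
        (α : ℂ)⁻¹ • (e * starOp (conjOp e)) ∧
      ∀ x : GA N, (∃ y : GA N, x = ((α : ℂ)⁻¹ • (e * starOp (conjOp e))) * y) ↔
        (∃ y : GA N, x = e * y) := by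
  classical
  obtain ⟨u₀, hu₀⟩ := hne
  set b : GA N := starOp (conjOp e) with hb
  have hsb : starOp (conjOp b) = e := sop_sop e
  obtain ⟨c, hc⟩ := hprim b
  -- auxiliary: ⟨act (b*e) u, u⟩ = ‖act e u‖²
  have aux : ∀ u : H N K, inn (act (b * e) u) u = ((innR (act e u) : ℝ) : ℂ) := by
    intro u
    rw [act_mul, adjoint, hsb, ← inn_self]
  -- sop (b * e) = b * e
  have hsbe : starOp (conjOp (b * e)) = b * e := by
    rw [sop_mul, hsb, hb]
  -- (b*e)*(b*e) = c • (b*e)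
  have hsq : (b * e) * (b * e) = c • (b * e) := by
    calc (b * e) * (b * e) = b * (e * b * e) := by
          rw [mul_assoc]; rw [← mul_assoc e b e]
      _ = b * (c • e) := by rw [hc]
      _ = c • (b * e) := by rw [mul_smul_comm]
  -- key identity: ‖act (b*e) u‖² = c * ‖act e u‖²
  have key : ∀ u : H N K,
      ((innR (act (b * e) u) : ℝ) : ℂ) = c * ((innR (act e u) : ℝ) : ℂ) := by
    intro u
    have h1 : inn (act ((b * e) * (b * e)) u) u
        = ((innR (act (b * e) u) : ℝ) : ℂ) := by
      rw [act_mul, adjoint, hsbe, ← inn_self]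
    have h2 : inn (act ((b * e) * (b * e)) u) u
        = c * ((innR (act e u) : ℝ) : ℂ) := by
      rw [hsq, act_smul, inn_smul_left, aux]
    rw [← h1, h2]
  have hr0 : innR (act e u₀) ≠ 0 := fun h => hu₀ (innR_eq_zero h)
  have hcne : c ≠ 0 := by
    intro hc0
    have h1 : ((innR (act (b * e) u₀) : ℝ) : ℂ) = 0 := by
      rw [key u₀, hc0, zero_mul]
    have h2 : act (b * e) u₀ = 0 :=
      innR_eq_zero (by exact_mod_cast h1)
    have h3 : ((innR (act e u₀) : ℝ) : ℂ) = 0 := by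
      rw [← aux u₀, h2, inn_zero_left]
    exact hr0 (by exact_mod_cast h3)
  -- c is real
  set α : ℝ := innR (act (b * e) u₀) / innR (act e u₀) with hα
  have hr0' : ((innR (act e u₀) : ℝ) : ℂ) ≠ 0 := Complex.ofReal_ne_zero.mpr hr0
  have hcα : c = (α : ℂ) := by
    rw [hα, Complex.ofReal_div, eq_div_iff hr0']
    exact (key u₀).symm
  have hαne : α ≠ 0 := by
    intro h; apply hcne; rw [hcα, h, Complex.ofReal_zero]
  have hce : e * b * e = (α : ℂ) • e := by rw [hc, hcα]
  have hene : e ≠ 0 := by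
    intro h; apply hu₀; rw [h, act_zero]
  refine ⟨?_, α, hαne, hce, ?_, ?_, ?_⟩
  · -- e * b ≠ 0
    intro h
    have : (0 : GA N) = (α : ℂ) • e := by rw [← hce, h, zero_mul]
    have he0 : e = 0 := by
      rcases smul_eq_zero.mp this.symm with h' | h'
      · exact absurd (by exact_mod_cast h' : (α : ℂ) = 0)
          (by simpa using (Complex.ofReal_ne_zero.mpr hαne))
      · exact h'
    exact hene he0
  · -- idempotency of f
    rw [smul_mul_assoc, mul_smul_comm, smul_smul]
    have h1 : (e * b) * (e * b) = (α : ℂ) • (e * b) := by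
      calc (e * b) * (e * b) = (e * b * e) * b := by rw [mul_assoc, ← mul_assoc e b (e*b), ← mul_assoc]
        _ = ((α : ℂ) • e) * b := by rw [hce]
        _ = (α : ℂ) • (e * b) := by rw [smul_mul_assoc]
    rw [h1, smul_smul]
    congr 1
    have : ((α : ℂ))⁻¹ * (α : ℂ) = 1 :=
      inv_mul_cancel₀ (Complex.ofReal_ne_zero.mpr hαne)
    rw [mul_assoc, this, mul_one]
  · -- self-adjointness of f
    rw [sop_smul, sop_mul, hsb, ← hb]
    congr 1
    rw [map_inv₀, Complex.conj_ofReal]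
  · -- same right ideal
    intro x
    constructor
    · rintro ⟨y, rfl⟩
      exact ⟨(α : ℂ)⁻¹ • (b * y), by
        rw [smul_mul_assoc, mul_smul_comm, mul_assoc]⟩
    · rintro ⟨y, rfl⟩
      refine ⟨e * y, ?_⟩
      rw [← mul_assoc, smul_mul_assoc, mul_assoc e b e, ← mul_assoc e b e, hce, smul_smul,
        inv_mul_cancel₀ (Complex.ofReal_ne_zero.mpr hαne), one_smul]
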